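/- arXiv:2407.19939 — 7 statements merged into one kernel-verified Lean document; each statement's English description precedes it below -/
import Mathlib

section
/- Every Lyndon word ℓ of length at least 2 admits a factorization ℓ = ℓ₁ℓ₂ where ℓ₂ is the longest proper suffix of ℓ that is itself Lyndon, and under this choice the prefix ℓ₁ is also a Lyndon word. -/
def IsLyndon {α : Type*} [LinearOrder α] (w : List α) : Prop :=
  w ≠ [] ∧ ∀ u v : List α, w = u ++ v → u ≠ [] → v ≠ [] → List.Lex (· < ·) w v

private lemma lex_append_left_iff {α : Type*} [LinearOrder α] (b x y : List α) :
    List.Lex (· < ·) (b ++ x) (b ++ y) ↔ List.Lex (· < ·) x y := by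
  induction b with
  | nil => rfl
  | cons a b ih => simpa [List.lex_cons_iff] using ih

private lemma lex_cases {α : Type*} [LinearOrder α] {x y : List α}
    (h : List.Lex (· < ·) x y) :
    (∃ c, c ≠ [] ∧ y = x ++ c) ∨ ∀ s t : List α, List.Lex (· < ·) (x ++ s) (y ++ t) := by
  induction h with
  | nil => exact Or.inl ⟨_, by simp, rfl⟩
  | @cons a l₁ l₂ _ ih =>
    rcases ih with ⟨c, hc, hl⟩ | hall
    · exact Or.inl ⟨c, hc, by rw [hl, List.cons_append]⟩
    · exact Or.inr fun s t => List.Lex.cons (hall s t)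
  | rel hab => exact Or.inr fun s t => List.Lex.rel hab

/-- Costandard factorization: any Lyndon word of length at least 2 factors as
ℓ = ℓ₁ℓ₂ where ℓ₂ is the longest proper Lyndon suffix, and then ℓ₁ is Lyndon. -/
theorem costandard_factorization {α : Type*} [LinearOrder α] (l : List α)
    (hl : IsLyndon l) (hlen : 2 ≤ l.length) :
    ∃ l₁ l₂ : List α, l = l₁ ++ l₂ ∧ l₁ ≠ [] ∧ l₂ ≠ [] ∧ IsLyndon l₂ ∧
      (∀ u v : List α, l = u ++ v → u ≠ [] → v ≠ [] → IsLyndon v →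
        v.length ≤ l₂.length) ∧
      IsLyndon l₁ := by
  classical
  obtain ⟨hlne, hlyn⟩ := hl
  -- S : the set of proper nonempty suffixes of l
  set S : Finset (List α) := (Finset.Ioo 0 l.length).image (fun k => l.drop k) with hSdef
  have hS : S.Nonempty := ⟨l.drop 1, Finset.mem_image.2 ⟨1, by simp [Finset.mem_Ioo]; omega, rfl⟩⟩
  obtain ⟨k, hk, hvk⟩ := Finset.mem_image.1 (S.min'_mem hS)
  rw [Finset.mem_Ioo] at hk
  set v : List α := l.drop k with hvdef
  set u : List α := l.take k with hudef
  have hluv : l = u ++ v := (List.take_append_drop k l).symm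
  have hulen : u.length = k := by simp [hudef]; omega
  have hvlen : v.length = l.length - k := by simp [hvdef]
  have hune : u ≠ [] := by
    intro h; rw [h] at hulen; simp at hulen; omega
  have hvne : v ≠ [] := by
    intro h; rw [h] at hvlen; simp at hvlen; omega
  -- any proper nonempty suffix is in S
  have hmem : ∀ a b : List α, l = a ++ b → a ≠ [] → b ≠ [] → b ∈ S := by
    intro a b hab ha hb
    refine Finset.mem_image.2 ⟨a.length, Finset.mem_Ioo.2 ⟨?_, ?_⟩, ?_⟩
    · exact List.length_pos_iff.2 ha
    · rw [hab]; simp [List.length_append]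
      exact List.length_pos_iff.2 hb
    · rw [hab, List.drop_left]
  have hmin : ∀ b ∈ S, v ≤ b := by
    intro b hb; rw [hvk]; exact S.min'_le b hb
  -- strict minimality for suffixes of different length
  have hminlt : ∀ b ∈ S, b.length ≠ v.length → List.Lex (· < ·) v b := by
    intro b hb hlb
    have h1 := hmin b hb
    have h2 : v ≠ b := fun h => hlb (by rw [h])
    exact lt_of_le_of_ne h1 h2
  -- v is Lyndon
  have hvlyn : IsLyndon v := by
    refine ⟨hvne, fun x y hxy hx hy => ?_⟩
    have hyS : y ∈ S := hmem (u ++ x) y (by rw [hluv, hxy, List.append_assoc]) (by simp [hune]) hy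
    have hylen : y.length ≠ v.length := by
      have hx' : 0 < x.length := List.length_pos_iff.2 hx
      have hh := congrArg List.length hxy
      simp [List.length_append] at hh
      omega
    exact hminlt y hyS hylen
  -- v is the longest proper Lyndon suffix
  have hlongest : ∀ a b : List α, l = a ++ b → a ≠ [] → b ≠ [] → IsLyndon b →
      b.length ≤ v.length := by
    intro a b hab ha hb hblyn
    by_contra hcon
    push_neg at hcon
    -- v is a proper suffix of b
    have hbd : b = l.drop a.length := by rw [hab, List.drop_left]
    have hblen : b.length = l.length - a.length := by rw [hbd]; simp
    have halen : a.length < k := by omega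
    have hvsub : v = b.drop (k - a.length) := by
      rw [hbd, List.drop_drop, hvdef]
      congr 1; omega
    have hsplit : b = b.take (k - a.length) ++ v := by
      rw [hvsub]; exact (List.take_append_drop _ b).symm
    have htne : b.take (k - a.length) ≠ [] := by
      intro h
      have hh := congrArg List.length hsplit
      rw [h] at hh; simp at hh
      omega
    have hlex : List.Lex (· < ·) b v := hblyn.2 _ v hsplit htne hvne
    have hbS : b ∈ S := hmem a b hab ha hb
    have := hmin b hbS
    exact absurd (lt_of_le_of_lt this hlex) (lt_irrefl _)
  -- u is Lyndon
  have hulyn : IsLyndon u := by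
    refine ⟨hune, fun x y hxy hx hy => ?_⟩
    have h1 : List.Lex (· < ·) l (y ++ v) :=
      hlyn x (y ++ v) (by rw [hluv, hxy, List.append_assoc]) hx (by simp [hy])
    rw [hluv] at h1
    rcases lt_trichotomy u y with h | h | h
    · exact h
    · exfalso
      have hx' : 0 < x.length := List.length_pos_iff.2 hx
      have hh : u.length = x.length + y.length := by rw [hxy]; simp
      have hh2 : u.length = y.length := by rw [h]
      omega
    · exfalso
      rcases lex_cases h with ⟨c, hc, hcu⟩ | hall
      · -- u = y ++ c ; then c ++ v < v but also v ≤ c ++ v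
        rw [hcu, List.append_assoc] at h1
        have h2 : List.Lex (· < ·) (c ++ v) v := (lex_append_left_iff y (c ++ v) v).1 h1
        have hcvS : c ++ v ∈ S :=
          hmem y (c ++ v) (by rw [hluv, hcu, List.append_assoc]) hy (by simp [hc])
        have h3 : v ≤ c ++ v := hmin _ hcvS
        exact absurd (lt_of_le_of_lt h3 h2) (lt_irrefl _)
      · have h1' : (u ++ v) < (y ++ v) := h1
        have h4 : (y ++ v) < (u ++ v) := hall v v
        exact absurd (lt_trans h1' h4) (lt_irrefl _)
  exact ⟨u, v, hluv, hune, hvne, hvlyn, hlongest, hulyn⟩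
end

section
/- Every nonempty word w over a totally ordered alphabet has a unique factorization w = ℓ₁ℓ₂…ℓ_k into Lyndon words satisfying ℓ₁ ≥ ℓ₂ ≥ … ≥ ℓ_k in the lexicographic order. -/
namespace CFL

variable {α : Type*} [LinearOrder α]

theorem lex_iff {u v : List α} : List.Lex (· < ·) u v ↔ u < v := Iff.rfl

/-- prepending a nonempty list makes words lex-larger than the suffix?? no:
a word is less than itself with something appended. -/
theorem lt_append_right (u : List α) {v : List α} (hv : v ≠ []) : u < u ++ v := by
  induction u with
  | nil =>
    cases v with
    | nil => exact absurd rfl hv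
    | cons a l => exact List.Lex.nil
  | cons a l ih => exact List.Lex.cons ih

theorem append_lt_append_left_iff {u x y : List α} : u ++ x < u ++ y ↔ x < y := by
  induction u with
  | nil => rfl
  | cons a l ih =>
    rw [List.cons_append, List.cons_append, show ((a :: (l ++ x)) < (a :: (l ++ y))) ↔
      List.Lex (· < ·) (a :: (l ++ x)) (a :: (l ++ y)) from Iff.rfl, List.lex_cons_iff]
    exact ih

/-- if ℓ < m then either ℓ ++ x < m, or ℓ is a prefix of m -/
theorem lt_append_cases {l m : List α} (h : l < m) (x : List α) :
    l ++ x < m ∨ l <+: m := by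
  induction h with
  | nil => exact Or.inr (List.nil_prefix)
  | @cons a l₁ l₂ h ih =>
    rcases ih with h' | h'
    · exact Or.inl (List.Lex.cons h')
    · exact Or.inr ((List.prefix_cons_inj a).mpr h')
  | rel h => exact Or.inl (List.Lex.rel h)

/-- existence of the minimal nonempty suffix -/
theorem exists_min_suffix (w : List α) (hw : w ≠ []) :
    ∃ m, m <:+ w ∧ m ≠ [] ∧ ∀ s, s <:+ w → s ≠ [] → m ≤ s := by
  induction w with
  | nil => exact absurd rfl hw
  | cons a t ih =>
    rcases eq_or_ne t [] with rfl | ht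
    · refine ⟨[a], List.suffix_refl _, by simp, ?_⟩
      intro s hs hs'
      have := List.suffix_cons_iff.mp hs
      rcases this with rfl | h
      · exact le_refl _
      · simp at h; exact absurd h hs'
    · obtain ⟨m, hm, hm0, hmin⟩ := ih ht
      refine ⟨min (a :: t) m, ?_, ?_, ?_⟩
      · rcases min_cases (a :: t) m with ⟨h, _⟩ | ⟨h, _⟩
        · rw [h]
        · rw [h]; exact hm.trans (List.suffix_cons a t)
      · rcases min_cases (a :: t) m with ⟨h, _⟩ | ⟨h, _⟩
        · rw [h]; simp
        · rw [h]; exact hm0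
      · intro s hs hs'
        rcases List.suffix_cons_iff.mp hs with rfl | h
        · exact min_le_left _ _
        · exact le_trans (min_le_right _ _) (hmin s h hs')

theorem min_suffix_lyndon {w m : List α} (hm : m <:+ w) (hm0 : m ≠ [])
    (hmin : ∀ s, s <:+ w → s ≠ [] → m ≤ s) : IsLyndon m := by
  refine ⟨hm0, ?_⟩
  intro u v huv hu hv
  rw [lex_iff]
  have hvs : v <:+ w := (List.suffix_append u v).trans (huv ▸ hm)
  have hle : m ≤ v := hmin v hvs hv
  have hne : m ≠ v := by
    intro h
    apply hu
    have := congrArg List.length huv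
    rw [h, List.length_append] at this
    simpa using this.symm
  exact lt_of_le_of_ne hle hne

/-- junction lemma: the min suffix is ≤ any nonempty suffix of the rest -/
theorem min_suffix_le {w' m l : List α} (hm0 : m ≠ [])
    (hmin : ∀ s, s <:+ w' ++ m → s ≠ [] → m ≤ s)
    (hlyn : IsLyndon m) (hl : l <:+ w') (hl0 : l ≠ []) : m ≤ l := by
  by_contra hlt
  push_neg at hlt
  obtain ⟨u, hu⟩ := hl
  have hsuf : l ++ m <:+ w' ++ m := ⟨u, by rw [← List.append_assoc, hu]⟩
  have hle : m ≤ l ++ m := hmin _ hsuf (by simp [hm0])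
  rcases lt_append_cases hlt m with h | h
  · exact absurd (lt_of_le_of_lt hle h) (lt_irrefl m)
  · obtain ⟨m₁, rfl⟩ := h
    have hm₁ : m₁ ≠ [] := by
      rintro rfl
      simp at hlt
    have h1 : l ++ m₁ < m₁ := hlyn.2 l m₁ rfl hl0 hm₁
    have h2 : m₁ ≤ l ++ m₁ := by
      rw [← not_lt] at hle ⊢
      intro hc
      exact hle (append_lt_append_left_iff.mpr hc)
    exact absurd (lt_of_le_of_lt h2 h1) (lt_irrefl _)

end CFL

namespace CFL
variable {α : Type*} [LinearOrder α]

instance : IsTrans (List α) (fun a b : List α => b = a ∨ b < a) :=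
  ⟨by rintro a b c (rfl | h1) (rfl | h2)
      · exact Or.inl rfl
      · exact Or.inr h2
      · exact Or.inr h1
      · exact Or.inr (h2.trans h1)⟩

omit [LinearOrder α] in
theorem getLast?_suffix_flatten {L : List (List α)} {x : List α} (h : x ∈ L.getLast?) :
    x <:+ L.flatten := by
  have h2 := List.dropLast_append_getLast? x h
  refine ⟨L.dropLast.flatten, ?_⟩
  conv_rhs => rw [← h2]
  simp

theorem flatten_ne_nil {L : List (List α)} (hL : L ≠ []) (hlyn : ∀ l ∈ L, IsLyndon l) :
    L.flatten ≠ [] := by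
  intro h
  rw [List.flatten_eq_nil_iff] at h
  exact (hlyn _ (List.getLast_mem hL)).1 (h _ (List.getLast_mem hL))

theorem exists_fact : ∀ (n : ℕ) (w : List α), w.length ≤ n → w ≠ [] →
    ∃ L : List (List α), L ≠ [] ∧ w = L.flatten ∧ (∀ l ∈ L, IsLyndon l) ∧
      L.Chain' (fun a b => b = a ∨ b < a) := by
  intro n
  induction n with
  | zero =>
    intro w hw hw0
    simp at hw
    exact absurd hw hw0
  | succ n ih =>
    intro w hw hw0
    obtain ⟨m, hm, hm0, hmin⟩ := exists_min_suffix w hw0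
    have hlynm : IsLyndon m := min_suffix_lyndon hm hm0 hmin
    obtain ⟨w', rfl⟩ := hm
    rcases eq_or_ne w' [] with rfl | hw'
    · exact ⟨[m], by simp, by simp, by simpa using hlynm, List.isChain_singleton _⟩
    · have hlen : w'.length ≤ n := by
        have := hw
        rw [List.length_append] at this
        have : 1 ≤ m.length := List.length_pos_iff.mpr hm0
        omega
      obtain ⟨L', hL0, hfl, hlyn, hch⟩ := ih w' hlen hw'
      refine ⟨L' ++ [m], by simp, by simp [← hfl], ?_, ?_⟩
      · intro l hl
        rcases List.mem_append.mp hl with h | h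
        · exact hlyn l h
        · simp at h; subst h; exact hlynm
      · refine List.isChain_append.mpr ?_
        refine ⟨hch, by simp, ?_⟩
        intro x hx y hy
        simp at hy; subst hy
        have hxs : x <:+ w' := hfl ▸ getLast?_suffix_flatten hx
        have hx0 : x ≠ [] := by
          have hmem : x ∈ L' := List.mem_of_mem_getLast? hx
          exact (hlyn x hmem).1
        have := min_suffix_le hm0 hmin hlynm hxs hx0
        rcases this.lt_or_eq with h | h
        · exact Or.inr h
        · exact Or.inl h

theorem lastMin : ∀ (L : List (List α)) (h : L ≠ []), (∀ l ∈ L, IsLyndon l) →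
    L.Chain' (fun a b => b = a ∨ b < a) →
    ∀ s, s <:+ L.flatten → s ≠ [] → s ≠ L.getLast h → L.getLast h < s := by
  intro L
  induction L with
  | nil => intro h; exact absurd rfl h
  | cons ℓ L' ih =>
    intro h hlyn hch s hs hs0 hsne
    rcases eq_or_ne L' [] with rfl | hL'
    · have hg : ([ℓ] : List (List α)).getLast h = ℓ := rfl
      rw [hg] at hsne ⊢
      simp only [List.flatten_cons, List.flatten_nil, List.append_nil] at hs
      obtain ⟨u, hu⟩ := hs
      have hu0 : u ≠ [] := by rintro rfl; simp at hu; exact hsne hu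
      exact (hlyn ℓ (by simp)).2 u s hu.symm hu0 hs0
    · have hgl : (ℓ :: L').getLast h = L'.getLast hL' := List.getLast_cons hL'
      rw [hgl] at hsne ⊢
      have hlast_le : L'.getLast hL' ≤ ℓ := by
        have hp := List.isChain_iff_pairwise.mp hch
        rcases hp with _ | ⟨hrel, _⟩
        rcases hrel _ (List.getLast_mem hL') with h' | h'
        · exact h'.le
        · exact h'.le
      rw [List.flatten_cons] at hs
      obtain ⟨u, hu⟩ := hs
      rcases List.append_eq_append_iff.mp hu with ⟨a', ha1, ha2⟩ | ⟨c', _, hc2⟩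
      · rcases eq_or_ne a' [] with rfl | ha0
        · -- s = flatten L'
          simp only [List.nil_append] at ha2
          subst ha2
          exact ih hL' (fun l hl => hlyn l (by simp [hl])) hch.tail _
            (List.suffix_refl _) hs0 hsne
        · -- s = a' ++ flatten L', a' nonempty suffix of ℓ
          subst ha2
          rcases eq_or_ne u [] with rfl | hu0
          · simp only [List.nil_append] at ha1
            subst ha1
            have hfl0 : L'.flatten ≠ [] :=
              flatten_ne_nil hL' (fun l hl => hlyn l (by simp [hl]))
            exact lt_of_le_of_lt hlast_le (lt_append_right _ hfl0)
          · have hlex : ℓ < a' := (hlyn ℓ (by simp)).2 u a' ha1 hu0 ha0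
            exact lt_of_le_of_lt hlast_le (List.Lex.append_right _ _ hlex)
      · -- s is a suffix of flatten L'
        have hsfl : s <:+ L'.flatten := ⟨c', hc2.symm⟩
        exact ih hL' (fun l hl => hlyn l (by simp [hl])) hch.tail s hsfl hs0 hsne

theorem unique_fact : ∀ (n : ℕ) (w : List α), w.length ≤ n → w ≠ [] →
    ∀ L M : List (List α),
    (w = L.flatten ∧ (∀ l ∈ L, IsLyndon l) ∧ L.Chain' (fun a b => b = a ∨ b < a)) →
    (w = M.flatten ∧ (∀ l ∈ M, IsLyndon l) ∧ M.Chain' (fun a b => b = a ∨ b < a)) →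
    L = M := by
  intro n
  induction n with
  | zero =>
    intro w hw hw0
    simp at hw
    exact absurd hw hw0
  | succ n ih =>
    intro w hw hw0 L M ⟨hLf, hLl, hLc⟩ ⟨hMf, hMl, hMc⟩
    have hL0 : L ≠ [] := by rintro rfl; exact hw0 (by simpa using hLf)
    have hM0 : M ≠ [] := by rintro rfl; exact hw0 (by simpa using hMf)
    set mL := L.getLast hL0 with hmL
    set mM := M.getLast hM0 with hmM
    have hmLnn : mL ≠ [] := (hLl _ (List.getLast_mem hL0)).1
    have hmMnn : mM ≠ [] := (hMl _ (List.getLast_mem hM0)).1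
    have hmLs : mL <:+ w := by
      rw [hLf]
      exact getLast?_suffix_flatten (by rw [List.getLast?_eq_getLast hL0]; rfl)
    have hmMs : mM <:+ w := by
      rw [hMf]
      exact getLast?_suffix_flatten (by rw [List.getLast?_eq_getLast hM0]; rfl)
    have heq : mL = mM := by
      by_contra hne
      have h1 := lastMin L hL0 hLl hLc mM (hLf ▸ hmMs) hmMnn (Ne.symm hne)
      have h2 := lastMin M hM0 hMl hMc mL (hMf ▸ hmLs) hmLnn hne
      exact absurd (h1.trans h2) (lt_irrefl _)
    have hLd : L.dropLast ++ [mL] = L := List.dropLast_append_getLast hL0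
    have hMd : M.dropLast ++ [mM] = M := List.dropLast_append_getLast hM0
    have hflat : L.dropLast.flatten ++ mL = M.dropLast.flatten ++ mM := by
      have h1 : L.dropLast.flatten ++ mL = w := by
        rw [hLf, ← hLd]; simp
      have h2 : M.dropLast.flatten ++ mM = w := by
        rw [hMf, ← hMd]; simp
      rw [h1, h2]
    rw [heq] at hflat
    have hflat' : L.dropLast.flatten = M.dropLast.flatten :=
      List.append_cancel_right hflat
    rcases eq_or_ne L.dropLast.flatten [] with hnil | hnn
    · have hd1 : L.dropLast = [] := by
        rw [List.flatten_eq_nil_iff] at hnil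
        rcases hd : L.dropLast with _ | ⟨x, t⟩
        · rfl
        · exact absurd (hnil x (by rw [hd]; simp))
            ((hLl x ((List.dropLast_sublist L).subset (by rw [hd]; simp))).1)
      have hd2 : M.dropLast = [] := by
        rw [hflat', List.flatten_eq_nil_iff] at hnil
        rcases hd : M.dropLast with _ | ⟨x, t⟩
        · rfl
        · exact absurd (hnil x (by rw [hd]; simp))
            ((hMl x ((List.dropLast_sublist M).subset (by rw [hd]; simp))).1)
      rw [← hLd, ← hMd, hd1, hd2, heq]
    · have hlen : L.dropLast.flatten.length ≤ n := by
        have h1 : L.dropLast.flatten ++ mL = w := by rw [hLf, ← hLd]; simp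
        have := congrArg List.length h1
        rw [List.length_append] at this
        have : 1 ≤ mL.length := List.length_pos_iff.mpr hmLnn
        omega
      have hrec := ih L.dropLast.flatten hlen hnn L.dropLast M.dropLast
        ⟨rfl, fun l hl => hLl l ((List.dropLast_sublist L).subset hl),
          hLc.prefix (List.dropLast_prefix L)⟩
        ⟨hflat', fun l hl => hMl l ((List.dropLast_sublist M).subset hl),
          hMc.prefix (List.dropLast_prefix M)⟩
      rw [← hLd, ← hMd, hrec, heq]

end CFL

/-- Canonical (Chen–Fox–Lyndon) factorization: every nonempty word has a unique
factorization into a weakly decreasing sequence of Lyndon words. -/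
theorem canonical_factorization {α : Type*} [LinearOrder α] (w : List α) (hw : w ≠ []) :
    ∃! L : List (List α), w = L.flatten ∧ (∀ l ∈ L, IsLyndon l) ∧
      L.Chain' (fun a b => b = a ∨ List.Lex (· < ·) b a) := by
  obtain ⟨L, _, hfl, hlyn, hch⟩ := CFL.exists_fact w.length w le_rfl hw
  refine ⟨L, ⟨hfl, hlyn, hch⟩, ?_⟩
  intro M ⟨hMf, hMl, hMc⟩
  exact CFL.unique_fact w.length w le_rfl hw M L ⟨hMf, hMl, hMc⟩ ⟨hfl, hlyn, hch⟩
end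

section
/- Let v and w be two exponent-tight loop words (over the weighted-ordered alphabet 𝓘) with the same horizontal degree (the multiset of letters' I-components agrees as elements of the free commutative monoid on I) and the same vertical degree (the same sum of exponents). Then v and w contain exactly the same multiset of letters of 𝓘. -/
def loopLt {I : Type*} [LinearOrder I] (c : I → ℤ) (x y : I × ℤ) : Prop :=
  ((y.2 : ℚ) / (c y.1 : ℚ) < (x.2 : ℚ) / (c x.1 : ℚ)) ∨
  ((x.2 : ℚ) / (c x.1 : ℚ) = (y.2 : ℚ) / (c y.1 : ℚ) ∧ x.1 < y.1)

/-- A loop word is exponent-tight if i_k^(d_k) ≥ i_r^(d_r+1) for all letters. -/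
def ExponentTight {I : Type*} [LinearOrder I] (c : I → ℤ) (w : List (I × ℤ)) : Prop :=
  ∀ x ∈ w, ∀ y ∈ w, ¬ loopLt c x (y.1, y.2 + 1)

section Helpers

/-- Every nonempty multiset in a linear order has a minimal member. -/
lemma multiset_exists_min {α : Type*} [LinearOrder α] (S : Multiset α) (h : S ≠ 0) :
    ∃ m ∈ S, ∀ x ∈ S, m ≤ x := by
  induction S using Multiset.induction with
  | empty => exact absurd rfl h
  | cons a S ih =>
    rcases eq_or_ne S 0 with rfl | hS
    · exact ⟨a, by simp⟩
    · obtain ⟨m, hm, hmin⟩ := ih hS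
      refine ⟨min a m, ?_, ?_⟩
      · rcases le_total a m with h' | h'
        · simp [min_eq_left h']
        · simp [min_eq_right h', hm]
      · intro x hx
        rcases Multiset.mem_cons.1 hx with rfl | hx
        · exact min_le_left _ _
        · exact le_trans (min_le_right _ _) (hmin x hx)

/-- Every nonempty multiset in a linear order has a maximal member. -/
lemma multiset_exists_max {α : Type*} [LinearOrder α] (S : Multiset α) (h : S ≠ 0) :
    ∃ m ∈ S, ∀ x ∈ S, x ≤ m := by
  induction S using Multiset.induction with
  | empty => exact absurd rfl h
  | cons a S ih =>
    rcases eq_or_ne S 0 with rfl | hS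
    · exact ⟨a, by simp⟩
    · obtain ⟨m, hm, hmax⟩ := ih hS
      refine ⟨max a m, ?_, ?_⟩
      · rcases le_total a m with h' | h'
        · simp [max_eq_right h', hm]
        · simp [max_eq_left h']
      · intro x hx
        rcases Multiset.mem_cons.1 hx with rfl | hx
        · exact le_max_left _ _
        · exact le_trans (hmax x hx) (le_max_right _ _)

/-- If two equal-sized multisets of integers have different sums, the larger one has an
element strictly bigger than some element of the smaller one. -/
lemma sum_lt_exists (S T : Multiset ℤ) (hcard : Multiset.card S = Multiset.card T)
    (h : T.sum < S.sum) : ∃ a ∈ S, ∃ b ∈ T, b < a := by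
  have hS : S ≠ 0 := by
    rintro rfl
    have : T = 0 := by
      rw [← Multiset.card_eq_zero, ← hcard]; simp
    simp [this] at h
  have hT : T ≠ 0 := by
    rintro rfl
    have : S = 0 := by rw [← Multiset.card_eq_zero, hcard]; simp
    simp [this] at h
  obtain ⟨a, haS, hamax⟩ := multiset_exists_max S hS
  obtain ⟨b, hbT, hbmin⟩ := multiset_exists_min T hT
  refine ⟨a, haS, b, hbT, ?_⟩
  by_contra hab
  push_neg at hab
  have h1 : S.sum ≤ Multiset.card S • b :=
    Multiset.sum_le_card_nsmul S b (fun x hx => (hamax x hx).trans hab)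
  have h2 : Multiset.card T • b ≤ T.sum := Multiset.card_nsmul_le_sum hbmin
  rw [hcard] at h1
  exact absurd (h1.trans h2) (not_le.2 h)

/-- Auxiliary strict sum comparison for the window lemma. -/
lemma window_sum_lt (S T : Multiset ℤ) (n : ℕ)
    (hScard : Multiset.card S = n + 1) (hTcard : Multiset.card T = n + 1)
    (hS : ∀ a ∈ S, ∀ b ∈ S, a ≤ b + 1) (m m' : ℤ) (hmS : m ∈ S)
    (hm'T : ∀ x ∈ T, m' ≤ x) (hlt : m < m') : S.sum < T.sum := by
  have hrep : S = m ::ₘ S.erase m := (Multiset.cons_erase hmS).symm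
  have hcard' : Multiset.card (S.erase m) = n := by
    rw [Multiset.card_erase_of_mem hmS, hScard]; rfl
  have hle : ∀ x ∈ S.erase m, x ≤ m + 1 :=
    fun x hx => hS x (Multiset.mem_of_mem_erase hx) m hmS
  have h1 : (S.erase m).sum ≤ (n : ℤ) * (m + 1) := by
    have := Multiset.sum_le_card_nsmul (S.erase m) (m + 1) hle
    rwa [hcard', nsmul_eq_mul] at this
  have h2 : ((n : ℤ) + 1) * m' ≤ T.sum := by
    have := Multiset.card_nsmul_le_sum hm'T
    rw [hTcard, nsmul_eq_mul] at this
    push_cast at this ⊢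
    linarith
  have h3 : ((n : ℤ) + 1) * (m + 1) ≤ ((n : ℤ) + 1) * m' := by
    apply mul_le_mul_of_nonneg_left _ (by positivity)
    omega
  have hsum : S.sum = m + (S.erase m).sum := by
    conv_lhs => rw [hrep]
    rw [Multiset.sum_cons]
  nlinarith

/-- Two integer multisets with the "window" property (any two elements differ by at most 1),
the same cardinality, and the same sum, are equal. -/
lemma window_eq : ∀ (n : ℕ) (S T : Multiset ℤ), Multiset.card S = n → Multiset.card T = n →
    (∀ a ∈ S, ∀ b ∈ S, a ≤ b + 1) → (∀ a ∈ T, ∀ b ∈ T, a ≤ b + 1) →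
    S.sum = T.sum → S = T := by
  intro n
  induction n with
  | zero =>
    intro S T hS hT _ _ _
    rw [Multiset.card_eq_zero] at hS hT
    rw [hS, hT]
  | succ n ih =>
    intro S T hScard hTcard hS hT hsum
    have hS0 : S ≠ 0 := by intro h; rw [h] at hScard; simp at hScard
    have hT0 : T ≠ 0 := by intro h; rw [h] at hTcard; simp at hTcard
    obtain ⟨m, hmS, hmmin⟩ := multiset_exists_min S hS0
    obtain ⟨m', hmT, hmmin'⟩ := multiset_exists_min T hT0
    have hmm : m = m' := by
      rcases lt_trichotomy m m' with h | h | h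
      · exact absurd (window_sum_lt S T n hScard hTcard hS m m' hmS hmmin' h)
          (by rw [hsum]; exact lt_irrefl _)
      · exact h
      · exact absurd (window_sum_lt T S n hTcard hScard hT m' m hmT hmmin h)
          (by rw [hsum]; exact lt_irrefl _)
    subst hmm
    have hSrep : S = m ::ₘ S.erase m := (Multiset.cons_erase hmS).symm
    have hTrep : T = m ::ₘ T.erase m := (Multiset.cons_erase hmT).symm
    have heq : S.erase m = T.erase m := by
      apply ih
      · rw [Multiset.card_erase_of_mem hmS, hScard]; rfl
      · rw [Multiset.card_erase_of_mem hmT, hTcard]; rfl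
      · intro a ha b hb
        exact hS a (Multiset.mem_of_mem_erase ha) b (Multiset.mem_of_mem_erase hb)
      · intro a ha b hb
        exact hT a (Multiset.mem_of_mem_erase ha) b (Multiset.mem_of_mem_erase hb)
      · have h1 : S.sum = m + (S.erase m).sum := by
          conv_lhs => rw [hSrep]
          rw [Multiset.sum_cons]
        have h2 : T.sum = m + (T.erase m).sum := by
          conv_lhs => rw [hTrep]
          rw [Multiset.sum_cons]
        omega
    rw [hSrep, hTrep, heq]

/-- Unpacking non-`loopLt`. -/
lemma tight_ineq {I : Type*} [LinearOrder I] (c : I → ℤ) {x y : I × ℤ}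
    (h : ¬ loopLt c x (y.1, y.2 + 1)) :
    (x.2 : ℚ) / (c x.1 : ℚ) ≤ ((y.2 : ℚ) + 1) / (c y.1 : ℚ) ∧
      ((x.2 : ℚ) / (c x.1 : ℚ) = ((y.2 : ℚ) + 1) / (c y.1 : ℚ) → ¬ x.1 < y.1) := by
  rw [loopLt] at h
  push_neg at h
  obtain ⟨h1, h2⟩ := h
  simp only at h1 h2
  push_cast at h1 h2
  exact ⟨h1, fun he => not_lt.2 (h2 he)⟩

/-- A multiset of pairs whose first components are all `i` is recovered from its seconds. -/
lemma eq_map_snd {I : Type*} (i : I) :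
    ∀ (M : Multiset (I × ℤ)), (∀ x ∈ M, x.1 = i) →
      M = (M.map Prod.snd).map (fun d => (i, d)) := by
  intro M
  induction M using Multiset.induction with
  | empty => intro _; simp
  | cons a M ih =>
    intro h
    have ha : a.1 = i := h a (Multiset.mem_cons_self a M)
    have : a = (i, a.2) := by rw [← ha]
    rw [Multiset.map_cons, Multiset.map_cons,
      ← ih (fun x hx => h x (Multiset.mem_cons_of_mem hx))]
    exact congrArg (· ::ₘ M) this

/-- Fiberwise decomposition of the sum of second components. -/
lemma fiber_sum {I : Type*} [Fintype I] [DecidableEq I] :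
    ∀ (M : Multiset (I × ℤ)),
      ∑ i : I, ((M.filter (fun x => x.1 = i)).map Prod.snd).sum = (M.map Prod.snd).sum := by
  intro M
  induction M using Multiset.induction with
  | empty => simp
  | cons a M ih =>
    have hstep : ∀ i : I,
        ((Multiset.filter (fun x => x.1 = i) (a ::ₘ M)).map Prod.snd).sum
          = (if a.1 = i then a.2 else 0)
            + ((Multiset.filter (fun x => x.1 = i) M).map Prod.snd).sum := by
      intro i
      rw [Multiset.filter_cons]
      split_ifs with h <;> simp
    simp only [hstep, Finset.sum_add_distrib, ih, Finset.sum_ite_eq, Finset.mem_univ, if_true,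
      Multiset.map_cons, Multiset.sum_cons]

end Helpers

/-- Two exponent-tight loop words with the same horizontal and vertical degrees
contain the same multiset of letters. -/
theorem exponentTight_same_letters {I : Type*} [Fintype I] [LinearOrder I]
    (c : I → ℤ) (hc : ∀ i, 0 < c i) (v w : List (I × ℤ))
    (hv : ExponentTight c v) (hw : ExponentTight c w)
    (hhdeg : (↑(v.map Prod.fst) : Multiset I) = ↑(w.map Prod.fst))
    (hvdeg : (v.map Prod.snd).sum = (w.map Prod.snd).sum) :
    (↑v : Multiset (I × ℤ)) = ↑w := by
  classical
  set V : Multiset (I × ℤ) := ↑v with hV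
  set W : Multiset (I × ℤ) := ↑w with hW
  have hcQ : ∀ i : I, (0 : ℚ) < (c i : ℚ) := fun i => by exact_mod_cast hc i
  -- membership transfer
  have hvmem : ∀ x ∈ V, x ∈ v := fun x hx => hx
  have hwmem : ∀ x ∈ W, x ∈ w := fun x hx => hx
  -- the fibers
  set F : I → Multiset (I × ℤ) → Multiset ℤ :=
    fun i M => (M.filter (fun x => x.1 = i)).map Prod.snd with hF
  -- cardinalities of fibers agree
  have hcard : ∀ i : I, Multiset.card (F i V) = Multiset.card (F i W) := by
    intro i
    have h1 : ∀ (M : Multiset (I × ℤ)),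
        Multiset.card (F i M) = Multiset.count i (M.map Prod.fst) := by
      intro M
      rw [hF]
      simp only [Multiset.card_map, Multiset.count_map]
      congr 1
      apply Multiset.filter_congr
      intro x _
      constructor <;> (intro h; exact h.symm)
    have hco : (V.map Prod.fst) = (W.map Prod.fst) := by
      rw [hV, hW]
      simpa using hhdeg
    rw [h1, h1, hco]
  -- window property of fibers
  have hwin : ∀ (i : I) (u : List (I × ℤ)), ExponentTight c u →
      ∀ a ∈ F i (↑u : Multiset (I × ℤ)), ∀ b ∈ F i (↑u : Multiset (I × ℤ)), a ≤ b + 1 := by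
    intro i u hu a ha b hb
    rw [hF] at ha hb
    obtain ⟨x, hx, hxa⟩ := Multiset.mem_map.1 ha
    obtain ⟨y, hy, hyb⟩ := Multiset.mem_map.1 hb
    rw [Multiset.mem_filter] at hx hy
    obtain ⟨hxu, hxi⟩ := hx
    obtain ⟨hyu, hyi⟩ := hy
    have ht := (tight_ineq c (hu x hxu y hyu)).1
    rw [hxi, hyi, hxa, hyb] at ht
    have := (div_le_div_iff_of_pos_right (hcQ i)).1 ht
    exact_mod_cast this
  -- core contradiction: fibers at two distinct letters cannot be strictly skewed
  have hcore : ∀ i j : I, i ≠ j → (F i W).sum < (F i V).sum → (F j V).sum < (F j W).sum →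
      False := by
    intro i j hij hiV hjW
    obtain ⟨d, hdS, e, heT, hed⟩ := sum_lt_exists (F i V) (F i W) (hcard i) hiV
    obtain ⟨e', he'S, d', hd'T, hde'⟩ := sum_lt_exists (F j W) (F j V) (hcard j).symm hjW
    -- unpack memberships
    obtain ⟨x, hx, hxd⟩ := Multiset.mem_map.1 hdS
    obtain ⟨y, hy, hye⟩ := Multiset.mem_map.1 heT
    obtain ⟨z, hz, hze'⟩ := Multiset.mem_map.1 he'S
    obtain ⟨p, hp, hpd'⟩ := Multiset.mem_map.1 hd'T
    rw [Multiset.mem_filter] at hx hy hz hp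
    -- x = (i,d) ∈ v, y = (i,e) ∈ w, z = (j,e') ∈ w, p = (j,d') ∈ v
    have t1 := tight_ineq c (hv x (hvmem x hx.1) p (hvmem p hp.1))
    have t2 := tight_ineq c (hw z (hwmem z hz.1) y (hwmem y hy.1))
    rw [hx.2, hp.2, hxd, hpd'] at t1
    rw [hz.2, hy.2, hze', hye] at t2
    have hd'le : ((d' : ℚ) + 1) ≤ (e' : ℚ) := by
      have h : (d' + 1 : ℤ) ≤ e' := hde'
      exact_mod_cast h
    have hele : ((e : ℚ) + 1) ≤ (d : ℚ) := by
      have h : (e + 1 : ℤ) ≤ d := hed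
      exact_mod_cast h
    have k1 : ((d' : ℚ) + 1) / (c j : ℚ) ≤ (e' : ℚ) / (c j : ℚ) :=
      (div_le_div_iff_of_pos_right (hcQ j)).2 hd'le
    have k2 : ((e : ℚ) + 1) / (c i : ℚ) ≤ (d : ℚ) / (c i : ℚ) :=
      (div_le_div_iff_of_pos_right (hcQ i)).2 hele
    have e1 : (d : ℚ) / (c i : ℚ) = ((d' : ℚ) + 1) / (c j : ℚ) :=
      le_antisymm t1.1 (by linarith [t1.1, t2.1])
    have e2 : (e' : ℚ) / (c j : ℚ) = ((e : ℚ) + 1) / (c i : ℚ) :=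
      le_antisymm t2.1 (by linarith [t1.1, t2.1])
    have hnij : ¬ i < j := t1.2 e1
    have hnji : ¬ j < i := t2.2 e2
    exact hij (le_antisymm (not_lt.1 hnji) (not_lt.1 hnij))
  -- fiber sums agree
  have hVs : (V.map Prod.snd).sum = (v.map Prod.snd).sum := by rw [hV]; simp
  have hWs : (W.map Prod.snd).sum = (w.map Prod.snd).sum := by rw [hW]; simp
  have hsum : ∀ i : I, (F i V).sum = (F i W).sum := by
    by_contra hns
    push_neg at hns
    obtain ⟨i0, hi0⟩ := hns
    have hgsum : ∑ i : I, ((F i V).sum - (F i W).sum) = 0 := by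
      rw [Finset.sum_sub_distrib]
      have h1 := fiber_sum V
      have h2 := fiber_sum W
      rw [hF]
      simp only [h1, h2, hVs, hWs, hvdeg, sub_self]
    rcases lt_trichotomy ((F i0 V).sum - (F i0 W).sum) 0 with hneg | hzero | hpos
    · -- find j with positive difference
      by_cases hall : ∀ j : I, (F j V).sum - (F j W).sum ≤ 0
      · have : ∑ i : I, ((F i V).sum - (F i W).sum) < ∑ _i : I, (0 : ℤ) :=
          Finset.sum_lt_sum (fun i _ => hall i) ⟨i0, Finset.mem_univ _, hneg⟩
        simp [hgsum] at this
      · push_neg at hall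
        obtain ⟨j, hj⟩ := hall
        have hne : j ≠ i0 := by intro h; rw [h] at hj; omega
        exact hcore j i0 hne (by omega) (by omega)
    · exact hi0 (by omega)
    · by_cases hall : ∀ j : I, 0 ≤ (F j V).sum - (F j W).sum
      · have : ∑ _i : I, (0 : ℤ) < ∑ i : I, ((F i V).sum - (F i W).sum) :=
          Finset.sum_lt_sum (fun i _ => hall i) ⟨i0, Finset.mem_univ _, hpos⟩
        simp [hgsum] at this
      · push_neg at hall
        obtain ⟨j, hj⟩ := hall
        have hne : i0 ≠ j := by intro h; rw [h] at hpos; omega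
        exact hcore i0 j hne (by omega) (by omega)
  -- fibers are equal
  have hfib : ∀ i : I, F i V = F i W := by
    intro i
    exact window_eq (Multiset.card (F i W)) (F i V) (F i W) (hcard i) rfl
      (hwin i v hv) (hwin i w hw) (hsum i)
  -- conclude
  apply Multiset.ext.2
  intro a
  have h1 : ∀ (M : Multiset (I × ℤ)),
      Multiset.count a M = Multiset.count a (M.filter (fun x => x.1 = a.1)) := by
    intro M
    rw [Multiset.count_filter]
    simp
  have hfilter : V.filter (fun x => x.1 = a.1) = W.filter (fun x => x.1 = a.1) := by
    have hv' : ∀ x ∈ V.filter (fun x => x.1 = a.1), x.1 = a.1 :=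
      fun x hx => (Multiset.mem_filter.1 hx).2
    have hw' : ∀ x ∈ W.filter (fun x => x.1 = a.1), x.1 = a.1 :=
      fun x hx => (Multiset.mem_filter.1 hx).2
    rw [eq_map_snd a.1 _ hv', eq_map_snd a.1 _ hw']
    exact congrArg (Multiset.map (fun d => (a.1, d))) (hfib a.1)
  rw [h1 V, h1 W, hfilter]
end

section
/- Let v = [i₁^(d₁)…i_m^(d_m)] and w = [j₁^(t₁)…j_m^(t_m)] be exponent-tight loop words of the same length m with equal horizontal degrees, vertical degrees satisfying vdeg w = vdeg v + 1, and such that j₁^(t₁) ≤ j_r^(t_r) for all r. Then the first letter j₁^(t₁) of w equals max_{1≤a≤m} { i_a^(d_a+1) }, and the multiset of the remaining letters of w equals the multiset {i_a^(d_a)}_{a=1}^m with one occurrence of j₁^(t₁−1) removed. -/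
namespace FLU

variable {I : Type*} [LinearOrder I]

/-- The "ratio" of a letter. -/
def Q (c : I → ℤ) (x : I × ℤ) : ℚ := (x.2 : ℚ) / (c x.1 : ℚ)

lemma loopLt_irrefl (c : I → ℤ) (x : I × ℤ) : ¬ loopLt c x x := by
  simp [loopLt]

lemma not_loopLt_iff (c : I → ℤ) (x y : I × ℤ) :
    ¬ loopLt c x y ↔ Q c x ≤ Q c y ∧ (Q c x = Q c y → y.1 ≤ x.1) := by
  simp only [loopLt, Q, not_or, not_lt, not_and]

lemma Q_up (c : I → ℤ) (y : I × ℤ) :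
    Q c (y.1, y.2 + 1) = Q c y + 1 / (c y.1 : ℚ) := by
  simp only [Q]
  push_cast
  rw [add_div]

lemma div_inj {a b q : ℚ} (hq : q ≠ 0) (h : a / q = b / q) : a = b := by
  rw [div_eq_div_iff hq hq] at h
  exact mul_right_cancel₀ hq h

lemma tight_pair {c : I → ℤ} {u : List (I × ℤ)} (hu : ExponentTight c u)
    {x y : I × ℤ} (hx : x ∈ u) (hy : y ∈ u) :
    Q c x ≤ Q c y + 1 / (c y.1 : ℚ) ∧
      (Q c x = Q c y + 1 / (c y.1 : ℚ) → y.1 ≤ x.1) := by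
  have H := (not_loopLt_iff c x (y.1, y.2 + 1)).mp (hu x hx y hy)
  rwa [Q_up] at H

lemma sum_nonpos' (s : Multiset ℤ) (h : ∀ x ∈ s, x ≤ 0) : s.sum ≤ 0 := by
  induction s using Multiset.induction with
  | empty => simp
  | cons a t ih =>
      simp only [Multiset.sum_cons]
      have h1 := h a (Multiset.mem_cons_self a t)
      have h2 := ih (fun x hx => h x (Multiset.mem_cons_of_mem hx))
      omega

lemma all_zero_of_sum_zero (s : Multiset ℤ) (h0 : ∀ x ∈ s, 0 ≤ x) (hs : s.sum = 0) :
    ∀ x ∈ s, x = 0 := by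
  induction s using Multiset.induction with
  | empty => simp
  | cons a t ih =>
      intro x hx
      simp only [Multiset.sum_cons] at hs
      have ha := h0 a (Multiset.mem_cons_self a t)
      have ht : 0 ≤ t.sum := Multiset.sum_nonneg (fun y hy => h0 y (Multiset.mem_cons_of_mem hy))
      rcases Multiset.mem_cons.mp hx with rfl | hx'
      · omega
      · exact ih (fun y hy => h0 y (Multiset.mem_cons_of_mem hy)) (by omega) x hx'

lemma sum_map_sub' (M : Multiset ((I × ℤ) × (I × ℤ))) :
    (M.map fun p => p.2.2 - p.1.2).sum
      = (M.map fun p => p.2.2).sum - (M.map fun p => p.1.2).sum := by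
  induction M using Multiset.induction with
  | empty => simp
  | cons a s ih =>
      simp only [Multiset.map_cons, Multiset.sum_cons, ih]
      ring

/-- The zero-measure case: if every pair is weakly increasing and the total increase
is 1, then exactly one pair increases (by 1) and the rest are constant. -/
lemma zero_case (M : Multiset ((I × ℤ) × (I × ℤ)))
    (hle : ∀ p ∈ M, p.1.2 ≤ p.2.2)
    (hsum : (M.map fun p => p.2.2).sum = (M.map fun p => p.1.2).sum + 1) :
    ∃ p₀ ∈ M, p₀.2.2 = p₀.1.2 + 1 ∧ ∀ p ∈ M.erase p₀, p.1.2 = p.2.2 := by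
  induction M using Multiset.induction with
  | empty => simp at hsum
  | cons a t ih =>
      have ha := hle a (Multiset.mem_cons_self a t)
      simp only [Multiset.map_cons, Multiset.sum_cons] at hsum
      have htle : ∀ p ∈ t, p.1.2 ≤ p.2.2 := fun p hp => hle p (Multiset.mem_cons_of_mem hp)
      have htge : (t.map fun p => p.1.2).sum ≤ (t.map fun p => p.2.2).sum :=
        Multiset.sum_map_le_sum_map _ _ htle
      by_cases h : a.2.2 = a.1.2
      · obtain ⟨p₀, hp₀m, hp₀, hrest⟩ := ih htle (by omega)
        refine ⟨p₀, Multiset.mem_cons_of_mem hp₀m, hp₀, ?_⟩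
        intro p hp
        have hne : p₀ ≠ a := by
          intro e; rw [e] at hp₀; omega
        rw [Multiset.erase_cons_tail_of_mem hp₀m] at hp
        rcases Multiset.mem_cons.mp hp with rfl | hp'
        · omega
        · exact hrest p hp'
      · -- a.2.2 ≥ a.1.2 + 1; then it must be exactly +1 and all of t constant
        have h1 : a.1.2 + 1 ≤ a.2.2 := by omega
        have hd : a.2.2 = a.1.2 + 1 := by omega
        have hts : (t.map fun p => p.2.2).sum = (t.map fun p => p.1.2).sum := by omega
        refine ⟨a, Multiset.mem_cons_self a t, hd, ?_⟩
        rw [Multiset.erase_cons_head]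
        intro p hp
        have hz : ∀ x ∈ (t.map fun p => p.2.2 - p.1.2), x = 0 := by
          apply all_zero_of_sum_zero
          · intro x hx
            obtain ⟨r, hr, rfl⟩ := Multiset.mem_map.mp hx
            have := htle r hr; omega
          · rw [sum_map_sub']; omega
        have := hz (p.2.2 - p.1.2) (Multiset.mem_map_of_mem _ hp)
        omega

/-- Key lemma: given a component-preserving pairing between two multisets of letters whose
second coordinates sum to one more, and such that any decreasing pair and increasing pair
force each other to be "swappable", the second multiset is the first with one letter bumped. -/
lemma key (N : ℕ) : ∀ (M : Multiset ((I × ℤ) × (I × ℤ))),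
    (M.map fun p => (p.1.2 - p.2.2).toNat).sum ≤ N →
    (∀ p ∈ M, p.1.1 = p.2.1) →
    (M.map fun p => p.2.2).sum = (M.map fun p => p.1.2).sum + 1 →
    (∀ p ∈ M, ∀ q ∈ M, p.2.2 < p.1.2 → q.1.2 < q.2.2 → p.2 = q.1 ∧ q.2 = p.1) →
    ∃ a₀ ∈ M.map Prod.fst,
      M.map Prod.snd = (a₀.1, a₀.2 + 1) ::ₘ (M.map Prod.fst).erase a₀ := by
  induction N with
  | zero =>
      intro M hN hcomp hsum _
      have h0 : (M.map fun p => (p.1.2 - p.2.2).toNat).sum = 0 := by omega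
      have hle : ∀ p ∈ M, p.1.2 ≤ p.2.2 := by
        intro p hp
        have := Multiset.sum_eq_zero_iff.mp h0 _ (Multiset.mem_map_of_mem _ hp)
        omega
      obtain ⟨p₀, hp₀, hd, hrest⟩ := zero_case M hle hsum
      refine ⟨p₀.1, Multiset.mem_map_of_mem _ hp₀, ?_⟩
      have hM : M = p₀ ::ₘ M.erase p₀ := (Multiset.cons_erase hp₀).symm
      have h2 : p₀.2 = (p₀.1.1, p₀.1.2 + 1) := by
        have hcp := hcomp p₀ hp₀
        exact Prod.ext hcp.symm hd
      have e1 : M.map Prod.snd = p₀.2 ::ₘ (M.erase p₀).map Prod.snd := by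
        conv_lhs => rw [hM]
        simp
      have e2 : (M.erase p₀).map Prod.snd = (M.erase p₀).map Prod.fst := by
        apply Multiset.map_congr rfl
        intro p hp
        have hcp := hcomp p (Multiset.mem_of_mem_erase hp)
        exact (Prod.ext hcp (hrest p hp)).symm
      have e3 : (M.map Prod.fst).erase p₀.1 = (M.erase p₀).map Prod.fst := by
        conv_lhs => rw [hM]
        simp
      rw [e1, e2, h2, e3]
  | succ N ih =>
      intro M hN hcomp hsum hswap
      by_cases h0 : (M.map fun p => (p.1.2 - p.2.2).toNat).sum = 0
      · exact ih M (by omega) hcomp hsum hswap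
      · -- find a decreasing pair p
        have hex : ∃ p ∈ M, p.2.2 < p.1.2 := by
          by_contra hall
          push_neg at hall
          apply h0
          apply Multiset.sum_eq_zero
          intro x hx
          obtain ⟨r, hr, rfl⟩ := Multiset.mem_map.mp hx
          have := hall r hr
          omega
        obtain ⟨p, hp, hpneg⟩ := hex
        -- find an increasing pair q
        have hsum1 : (M.map fun p => p.2.2 - p.1.2).sum = 1 := by
          rw [sum_map_sub']; omega
        have hexq : ∃ q ∈ M, q.1.2 < q.2.2 := by
          by_contra hall
          push_neg at hall
          have : (M.map fun p => p.2.2 - p.1.2).sum ≤ 0 := by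
            apply sum_nonpos'
            intro x hx
            obtain ⟨r, hr, rfl⟩ := Multiset.mem_map.mp hx
            have := hall r hr
            omega
          omega
        obtain ⟨q, hq, hqpos⟩ := hexq
        have hpq : p ≠ q := by
          intro e; rw [e] at hpneg; omega
        obtain ⟨hb, hb'⟩ := hswap p hp q hq hpneg hqpos
        have hqe : q ∈ M.erase p := (Multiset.mem_erase_of_ne (Ne.symm hpq)).mpr hq
        have hMeq : M = p ::ₘ q ::ₘ (M.erase p).erase q := by
          rw [Multiset.cons_erase hqe, Multiset.cons_erase hp]
        have hsub : ∀ r ∈ (M.erase p).erase q, r ∈ M := fun r hr =>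
          Multiset.mem_of_mem_erase (Multiset.mem_of_mem_erase hr)
        set M' : Multiset ((I × ℤ) × (I × ℤ)) :=
          (p.1, p.1) ::ₘ (q.1, q.1) ::ₘ (M.erase p).erase q with hM'
        have hfst : M'.map Prod.fst = M.map Prod.fst := by
          conv_rhs => rw [hMeq]
          simp [hM']
        have hsnd : M'.map Prod.snd = M.map Prod.snd := by
          conv_rhs => rw [hMeq]
          simp only [hM', Multiset.map_cons]
          rw [hb, hb']
          exact Multiset.cons_swap _ _ _
        -- measure decreases
        have hmeas : (M'.map fun r => (r.1.2 - r.2.2).toNat).sum ≤ N := by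
          have hMn : (M.map fun r => (r.1.2 - r.2.2).toNat).sum
              = (p.1.2 - p.2.2).toNat + ((q.1.2 - q.2.2).toNat
                + (((M.erase p).erase q).map fun r => (r.1.2 - r.2.2).toNat).sum) := by
            conv_lhs => rw [hMeq]
            simp
          have : (M'.map fun r => (r.1.2 - r.2.2).toNat).sum
              = (((M.erase p).erase q).map fun r => (r.1.2 - r.2.2).toNat).sum := by
            simp [hM']
          omega
        -- transfer hypotheses to M'
        have hcomp' : ∀ r ∈ M', r.1.1 = r.2.1 := by
          intro r hr
          rcases Multiset.mem_cons.mp hr with rfl | hr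
          · rfl
          rcases Multiset.mem_cons.mp hr with rfl | hr
          · rfl
          · exact hcomp r (hsub r hr)
        have hmem' : ∀ r ∈ M', r.1 = r.2 ∨ r ∈ M := by
          intro r hr
          rcases Multiset.mem_cons.mp hr with rfl | hr
          · exact Or.inl rfl
          rcases Multiset.mem_cons.mp hr with rfl | hr
          · exact Or.inl rfl
          · exact Or.inr (hsub r hr)
        have hsum2 : (M'.map fun r => r.2.2).sum = (M'.map fun r => r.1.2).sum + 1 := by
          have efst : (M'.map fun r => r.1.2).sum = (M.map fun r => r.1.2).sum := by
            rw [show (fun r : (I × ℤ) × (I × ℤ) => r.1.2) = (fun a : I × ℤ => a.2) ∘ Prod.fst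
              from rfl, ← Multiset.map_map, hfst, Multiset.map_map]
          have esnd : (M'.map fun r => r.2.2).sum = (M.map fun r => r.2.2).sum := by
            rw [show (fun r : (I × ℤ) × (I × ℤ) => r.2.2) = (fun a : I × ℤ => a.2) ∘ Prod.snd
              from rfl, ← Multiset.map_map, hsnd, Multiset.map_map]
          omega
        have hswap' : ∀ r ∈ M', ∀ r' ∈ M', r.2.2 < r.1.2 → r'.1.2 < r'.2.2 →
            r.2 = r'.1 ∧ r'.2 = r.1 := by
          intro r hr r' hr' h1 h2
          rcases hmem' r hr with he | hrm
          · rw [he] at h1; omega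
          rcases hmem' r' hr' with he' | hrm'
          · rw [he'] at h2; omega
          exact hswap r hrm r' hrm' h1 h2
        obtain ⟨a₀, hmem, hconc⟩ := ih M' hmeas hcomp' hsum2 hswap'
        rw [hfst, hsnd] at hconc
        rw [hfst] at hmem
        exact ⟨a₀, hmem, hconc⟩

/-- Build a component-preserving pairing from equal horizontal degrees. -/
lemma build : ∀ (v : List (I × ℤ)) (B : Multiset (I × ℤ)),
    (↑(v.map Prod.fst) : Multiset I) = B.map Prod.fst →
    ∃ M : Multiset ((I × ℤ) × (I × ℤ)),
      M.map Prod.fst = ↑v ∧ M.map Prod.snd = B ∧ ∀ p ∈ M, p.1.1 = p.2.1 := by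
  intro v
  induction v with
  | nil =>
      intro B hB
      refine ⟨0, by simp, ?_, by simp⟩
      have : B.map Prod.fst = 0 := by simpa using hB.symm
      simp [Multiset.map_eq_zero.mp this]
  | cons a v ih =>
      intro B hB
      have hafst : a.1 ∈ B.map Prod.fst := by
        rw [← hB]; simp
      obtain ⟨b, hbB, hba⟩ := Multiset.mem_map.mp hafst
      have hB' : (↑(v.map Prod.fst) : Multiset I) = (B.erase b).map Prod.fst := by
        have hcons : B.map Prod.fst = b.1 ::ₘ (B.erase b).map Prod.fst := by
          conv_lhs => rw [← Multiset.cons_erase hbB]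
          simp
        rw [hcons, hba] at hB
        have : (a.1 ::ₘ ↑(v.map Prod.fst) : Multiset I) = a.1 ::ₘ (B.erase b).map Prod.fst := by
          simpa using hB
        exact (Multiset.cons_inj_right a.1).mp this
      obtain ⟨M, h1, h2, h3⟩ := ih (B.erase b) hB'
      refine ⟨(a, b) ::ₘ M, by simp [h1], ?_, ?_⟩
      · simp only [Multiset.map_cons, h2]
        exact Multiset.cons_erase hbB
      · intro p hp
        rcases Multiset.mem_cons.mp hp with rfl | hp
        · exact hba.symm
        · exact h3 p hp

/-- Existence of a max element for the ratio function. -/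
lemma exists_max (f : (I × ℤ) → ℚ) : ∀ (l : List (I × ℤ)), l ≠ [] →
    ∃ m ∈ l, ∀ x ∈ l, f x ≤ f m := by
  intro l
  induction l with
  | nil => simp
  | cons a t ih =>
      intro _
      by_cases ht : t = []
      · subst ht
        exact ⟨a, by simp, by simp⟩
      · obtain ⟨m, hm, hma⟩ := ih ht
        by_cases hcmp : f a ≤ f m
        · refine ⟨m, List.mem_cons_of_mem a hm, ?_⟩
          intro x hx
          rcases List.mem_cons.mp hx with rfl | hx
          · exact hcmp
          · exact hma x hx
        · refine ⟨a, List.mem_cons_self, ?_⟩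
          intro x hx
          rcases List.mem_cons.mp hx with rfl | hx
          · exact le_rfl
          · exact (hma x hx).trans (le_of_not_ge hcmp)

end FLU

/-- For exponent-tight loop words v, w of the same length, equal horizontal degree,
vdeg w = vdeg v + 1, and w starting with its minimal letter: the first letter of w
is max { i_a^(d_a+1) }, and the remaining letters of w form the multiset of letters
of v with one occurrence of j₁^(t₁−1) removed. -/
theorem first_letter_up {I : Type*} [Fintype I] [LinearOrder I]
    (c : I → ℤ) (hc : ∀ i, 0 < c i) (v w : List (I × ℤ))
    (hvne : v ≠ []) (hwne : w ≠ []) (hlen : v.length = w.length)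
    (hv : ExponentTight c v) (hw : ExponentTight c w)
    (hhdeg : (↑(v.map Prod.fst) : Multiset I) = ↑(w.map Prod.fst))
    (hvdeg : (w.map Prod.snd).sum = (v.map Prod.snd).sum + 1)
    (hmin : ∀ x ∈ w, ¬ loopLt c x (w.head hwne)) :
    (w.head hwne ∈ v.map (fun x => (x.1, x.2 + 1)) ∧
      ∀ x ∈ v, ¬ loopLt c (w.head hwne) (x.1, x.2 + 1)) ∧
    (↑w.tail : Multiset (I × ℤ)) =
      (↑v : Multiset (I × ℤ)).erase ((w.head hwne).1, (w.head hwne).2 - 1) := by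
  classical
  open FLU in
  set h : I × ℤ := w.head hwne with hh_def
  have hhw : h ∈ w := List.head_mem hwne
  have hcQ : ∀ i : I, (0 : ℚ) < (c i : ℚ) := fun i => by exact_mod_cast hc i
  -- minimality facts
  have hminQ : ∀ x ∈ w, Q c x ≤ Q c h ∧ (Q c x = Q c h → h.1 ≤ x.1) := by
    intro x hx
    exact (FLU.not_loopLt_iff c x h).mp (hmin x hx)
  -- maximum of v
  obtain ⟨am, ham, hmax⟩ := FLU.exists_max (Q c) v hvne
  -- build pairing
  have hhdeg' : (↑(v.map Prod.fst) : Multiset I) = (↑w : Multiset (I × ℤ)).map Prod.fst := by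
    rw [hhdeg, Multiset.map_coe]
  obtain ⟨M, hMf, hMs, hMc⟩ := FLU.build v (↑w) hhdeg'
  have hmem1 : ∀ p ∈ M, p.1 ∈ v := by
    intro p hp
    have : p.1 ∈ M.map Prod.fst := Multiset.mem_map_of_mem _ hp
    rw [hMf] at this
    exact Multiset.mem_coe.mp this
  have hmem2 : ∀ p ∈ M, p.2 ∈ w := by
    intro p hp
    have : p.2 ∈ M.map Prod.snd := Multiset.mem_map_of_mem _ hp
    rw [hMs] at this
    exact Multiset.mem_coe.mp this
  -- sums
  have hsumM : (M.map fun p => p.2.2).sum = (M.map fun p => p.1.2).sum + 1 := by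
    have e2 : (M.map fun p => p.2.2).sum = (w.map Prod.snd).sum := by
      rw [show (fun p : (I × ℤ) × (I × ℤ) => p.2.2) = (fun a : I × ℤ => a.2) ∘ Prod.snd
        from rfl, ← Multiset.map_map, hMs, Multiset.map_coe, Multiset.sum_coe]
    have e1 : (M.map fun p => p.1.2).sum = (v.map Prod.snd).sum := by
      rw [show (fun p : (I × ℤ) × (I × ℤ) => p.1.2) = (fun a : I × ℤ => a.2) ∘ Prod.fst
        from rfl, ← Multiset.map_map, hMf, Multiset.map_coe, Multiset.sum_coe]
    omega
  -- swap hypothesis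
  have hswap : ∀ p ∈ M, ∀ r ∈ M, p.2.2 < p.1.2 → r.1.2 < r.2.2 → p.2 = r.1 ∧ r.2 = p.1 := by
    intro p hp r hr hneg hpos
    have hpc : p.1.1 = p.2.1 := hMc p hp
    have hrc : r.1.1 = r.2.1 := hMc r hr
    have hp1 : p.1 ∈ v := hmem1 p hp
    have hp2 : p.2 ∈ w := hmem2 p hp
    have hr1 : r.1 ∈ v := hmem1 r hr
    have hr2 : r.2 ∈ w := hmem2 r hr
    -- chain of inequalities
    have c1 : Q c h ≤ Q c p.2 + 1 / (c p.2.1 : ℚ) := (FLU.tight_pair hw hhw hp2).1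
    have c2 : Q c p.2 + 1 / (c p.2.1 : ℚ) ≤ Q c p.1 := by
      have hle : (p.2.2 : ℚ) + 1 ≤ (p.1.2 : ℚ) := by exact_mod_cast hneg
      simp only [Q, ← hpc]
      rw [← add_div]
      gcongr
      exact (hcQ _).le

    have c3 : Q c p.1 ≤ Q c am := hmax p.1 hp1
    have c4 : Q c am ≤ Q c r.1 + 1 / (c r.1.1 : ℚ) := (FLU.tight_pair hv ham hr1).1
    have c5 : Q c r.1 + 1 / (c r.1.1 : ℚ) ≤ Q c r.2 := by
      have hle : (r.1.2 : ℚ) + 1 ≤ (r.2.2 : ℚ) := by exact_mod_cast hpos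
      simp only [Q, hrc]
      rw [← add_div]
      gcongr
      exact (hcQ _).le

    have c6 : Q c r.2 ≤ Q c h := (hminQ r.2 hr2).1
    -- all inequalities are equalities
    have e25 : Q c r.2 = Q c p.2 + 1 / (c p.2.1 : ℚ) := by linarith
    have e14 : Q c p.1 = Q c r.1 + 1 / (c r.1.1 : ℚ) := by linarith
    -- tie-breaking
    have t1 : p.2.1 ≤ r.2.1 := (FLU.tight_pair hw hr2 hp2).2 e25
    have t2 : r.1.1 ≤ p.1.1 := (FLU.tight_pair hv hp1 hr1).2 e14
    have hcomp_eq : p.1.1 = r.1.1 := by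
      apply le_antisymm _ t2
      rw [hpc, hrc] at *
      exact t1
    -- value equalities
    have hc_ne : (c r.1.1 : ℚ) ≠ 0 := ne_of_gt (hcQ r.1.1)
    have hv1 : p.1.2 = r.1.2 + 1 := by
      rw [Q, Q, hcomp_eq, ← add_div] at e14
      have := FLU.div_inj hc_ne e14
      exact_mod_cast this
    have hv2 : r.2.2 = p.2.2 + 1 := by
      rw [Q, Q, ← add_div] at e25
      rw [← hrc, ← hpc, hcomp_eq] at e25
      have := FLU.div_inj hc_ne e25
      exact_mod_cast this
    constructor
    · apply Prod.ext
      · rw [← hpc, hcomp_eq]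
      · omega
    · apply Prod.ext
      · rw [← hrc]
        exact hcomp_eq.symm
      · omega
  -- apply the key lemma
  obtain ⟨a₀, ha₀A, hBeq⟩ := FLU.key ((M.map fun p => (p.1.2 - p.2.2).toNat).sum) M
    le_rfl hMc hsumM hswap
  rw [hMf] at ha₀A
  rw [hMf, hMs] at hBeq
  have ha₀v : a₀ ∈ v := Multiset.mem_coe.mp ha₀A
  -- show h = (a₀.1, a₀.2 + 1)
  have hEq : h = (a₀.1, a₀.2 + 1) := by
    by_contra hne
    have hhB : h ∈ (↑w : Multiset (I × ℤ)) := Multiset.mem_coe.mpr hhw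
    rw [hBeq] at hhB
    rcases Multiset.mem_cons.mp hhB with he | hh2
    · exact hne he
    have hhv : h ∈ v := Multiset.mem_coe.mp (Multiset.mem_of_mem_erase hh2)
    have ha₀w : (a₀.1, a₀.2 + 1) ∈ w := by
      have : (a₀.1, a₀.2 + 1) ∈ (↑w : Multiset (I × ℤ)) := by
        rw [hBeq]; exact Multiset.mem_cons_self _ _
      exact Multiset.mem_coe.mp this
    have c1 : Q c h ≤ Q c am := hmax h hhv
    have c2 : Q c am ≤ Q c a₀ + 1 / (c a₀.1 : ℚ) := (FLU.tight_pair hv ham ha₀v).1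
    have c3 : Q c (a₀.1, a₀.2 + 1) = Q c a₀ + 1 / (c a₀.1 : ℚ) := FLU.Q_up c a₀
    have c4 : Q c (a₀.1, a₀.2 + 1) ≤ Q c h := (hminQ _ ha₀w).1
    have e1 : Q c (a₀.1, a₀.2 + 1) = Q c h := by linarith
    have t1 : h.1 ≤ a₀.1 := by
      have := (hminQ _ ha₀w).2 e1
      simpa using this
    have t2 : a₀.1 ≤ h.1 := (FLU.tight_pair hv hhv ha₀v).2 (by linarith)
    have hj : h.1 = a₀.1 := le_antisymm t1 t2
    have hval : h.2 = a₀.2 + 1 := by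
      have e2 : Q c h = Q c a₀ + 1 / (c a₀.1 : ℚ) := by linarith
      rw [Q, Q, ← add_div, hj] at e2
      have := FLU.div_inj (ne_of_gt (hcQ a₀.1)) e2
      exact_mod_cast this
    exact hne (Prod.ext hj hval)
  -- conclusions
  have ha₀h : a₀ = (h.1, h.2 - 1) := by
    refine Prod.ext ?_ ?_ <;> rw [hEq] <;> simp
  refine ⟨⟨?_, ?_⟩, ?_⟩
  · exact List.mem_map.mpr ⟨a₀, ha₀v, hEq.symm⟩
  · intro x hx
    by_cases hxa : x = a₀
    · subst hxa
      rw [← hEq]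
      exact FLU.loopLt_irrefl c h
    · have hxw : x ∈ w := by
        have : x ∈ (↑w : Multiset (I × ℤ)) := by
          rw [hBeq]
          exact Multiset.mem_cons_of_mem
            ((Multiset.mem_erase_of_ne hxa).mpr (Multiset.mem_coe.mpr hx))
        exact Multiset.mem_coe.mp this
      exact hw h hhw x hxw
  · have hwc : (↑w : Multiset (I × ℤ)) = h ::ₘ (↑w.tail : Multiset (I × ℤ)) := by
      conv_lhs => rw [← List.cons_head_tail hwne]
      rfl
    rw [hwc, hEq] at hBeq
    have h2 := (Multiset.cons_inj_right _).mp hBeq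
    rw [h2, ← ha₀h]
end

section
/- Let w = [i₁^(d₁)…i_n^(d_n)] be an exponent-tight loop word whose first letter i₁^(d₁) is minimal among its letters. If d₁ ≤ 0 then the vertical degree d₁+⋯+d_n ≤ 0; equivalently, if the vertical degree is positive then d₁ > 0. Conversely, if d₁ > 0 then the vertical degree is positive. -/
/-- For an exponent-tight loop word whose first letter is minimal among its letters:
if the first exponent is ≤ 0 then the vertical degree is ≤ 0, and if the first
exponent is > 0 then the vertical degree is > 0. -/
theorem first_exponent_sign {I : Type*} [Fintype I] [LinearOrder I]
    (c : I → ℤ) (hc : ∀ i, 0 < c i) (w : List (I × ℤ)) (hne : w ≠ [])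
    (htight : ExponentTight c w)
    (hmin : ∀ x ∈ w, ¬ loopLt c x (w.head hne)) :
    ((w.head hne).2 ≤ 0 → (w.map Prod.snd).sum ≤ 0) ∧
    (0 < (w.head hne).2 → 0 < (w.map Prod.snd).sum) := by
  obtain ⟨x0, t, rfl⟩ : ∃ x0 t, w = x0 :: t := by
    cases w with
    | nil => exact absurd rfl hne
    | cons a l => exact ⟨a, l, rfl⟩
  simp only [List.head_cons] at hmin ⊢
  have hcq : ∀ i : I, (0:ℚ) < (c i : ℚ) := fun i => by exact_mod_cast hc i
  constructor
  · intro h0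
    have hx0 : (x0.2 : ℚ) / (c x0.1 : ℚ) ≤ 0 :=
      div_nonpos_of_nonpos_of_nonneg (by exact_mod_cast h0) (le_of_lt (hcq x0.1))
    have key : ∀ x ∈ x0 :: t, x.2 ≤ 0 := by
      intro x hx
      have h := hmin x hx
      unfold loopLt at h
      push_neg at h
      have h1 : (x.2:ℚ)/(c x.1:ℚ) ≤ (x0.2:ℚ)/(c x0.1:ℚ) := h.1
      have h2 : (x.2:ℚ) ≤ 0 * (c x.1:ℚ) := (div_le_iff₀ (hcq _)).mp (h1.trans hx0)
      exact_mod_cast (by simpa using h2 : (x.2:ℚ) ≤ 0)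
    have gen : ∀ (l : List (I × ℤ)), (∀ x ∈ l, x.2 ≤ 0) → (l.map Prod.snd).sum ≤ 0 := by
      intro l
      induction l with
      | nil => simp
      | cons a l ih =>
        intro h
        simp only [List.map_cons, List.sum_cons]
        have h1 := h a List.mem_cons_self
        have h2 := ih (fun x hx => h x (List.mem_cons_of_mem _ hx))
        linarith
    exact gen _ key
  · intro h0
    have key : ∀ x ∈ x0 :: t, 0 ≤ x.2 := by
      intro x hx
      have h := htight x0 List.mem_cons_self x hx
      unfold loopLt at h
      push_neg at h
      have h1 : (x0.2:ℚ)/(c x0.1:ℚ) ≤ ((x.2 + 1 : ℤ):ℚ)/(c x.1:ℚ) := h.1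
      have hpos : (0:ℚ) < (x0.2:ℚ)/(c x0.1:ℚ) := div_pos (by exact_mod_cast h0) (hcq _)
      have h2 : 0 * (c x.1:ℚ) < ((x.2 + 1 : ℤ):ℚ) := (lt_div_iff₀ (hcq _)).mp (hpos.trans_le h1)
      have h3 : (0:ℤ) < x.2 + 1 := by exact_mod_cast (by simpa using h2 : (0:ℚ) < ((x.2+1:ℤ):ℚ))
      omega
    have ht : 0 ≤ (t.map Prod.snd).sum := by
      apply List.sum_nonneg
      intro a ha
      obtain ⟨x, hx, rfl⟩ := List.mem_map.mp ha
      exact key x (List.mem_cons_of_mem _ hx)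
    simp only [List.map_cons, List.sum_cons]
    linarith
end

section
/- The shift map Υ sending a loop word [i₁^(d₁)…i_k^(d_k)] to [i₁^(d₁+c_{i₁})…i_k^(d_k+c_{i_k})] is strictly monotone for the lexicographic order on loop words: u < v if and only if Υ(u) < Υ(v). Consequently, Υ maps Lyndon loop words to Lyndon loop words, and if ℓ = ℓ₁ℓ₂ is the costandard factorization of a Lyndon loop word ℓ, then Υ(ℓ) = Υ(ℓ₁)Υ(ℓ₂) is the costandard factorization of Υ(ℓ). -/
/-- A word is Lyndon w.r.t. a relation if it is nonempty and Lex-smaller than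
all of its proper suffixes. -/
def IsLyndonRel {β : Type*} (r : β → β → Prop) (w : List β) : Prop :=
  w ≠ [] ∧ ∀ u v : List β, w = u ++ v → u ≠ [] → v ≠ [] → List.Lex r w v

/-- `Costandard r l₁ l₂` says that `l₁ ++ l₂` is Lyndon and `l₂` is its longest
proper Lyndon suffix (the costandard factorization). -/
def Costandard {β : Type*} (r : β → β → Prop) (l₁ l₂ : List β) : Prop :=
  l₁ ≠ [] ∧ l₂ ≠ [] ∧ IsLyndonRel r (l₁ ++ l₂) ∧ IsLyndonRel r l₂ ∧
    ∀ u v : List β, l₁ ++ l₂ = u ++ v → u ≠ [] → v ≠ [] → IsLyndonRel r v →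
      v.length ≤ l₂.length

private lemma lex_cons_inv {α : Type*} {r : α → α → Prop} {x y : α}
    {l m : List α} (h : List.Lex r (x :: l) (y :: m)) :
    r x y ∨ (x = y ∧ List.Lex r l m) := by
  cases h with
  | cons h => exact Or.inr ⟨rfl, h⟩
  | rel h => exact Or.inl h

private lemma lex_map_iff {α : Type*} (f : α → α) (r : α → α → Prop)
    (hinj : Function.Injective f)
    (hf : ∀ x y, r x y ↔ r (f x) (f y)) :
    ∀ u v : List α, List.Lex r u v ↔ List.Lex r (u.map f) (v.map f) := by
  intro u
  induction u with
  | nil =>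
    intro v
    cases v with
    | nil => simp
    | cons b t => simp [List.Lex.nil]
  | cons a u ih =>
    intro v
    cases v with
    | nil =>
      constructor <;> (intro h; exact absurd h (by exact fun h => by cases h))
    | cons b t =>
      constructor
      · intro h
        cases h with
        | cons h => exact List.Lex.cons ((ih t).mp h)
        | rel h => exact List.Lex.rel ((hf a b).mp h)
      · intro h
        simp only [List.map_cons] at h
        rcases lex_cons_inv h with h2 | ⟨hab, h2⟩
        · exact List.Lex.rel ((hf a b).mpr h2)
        · obtain rfl : a = b := hinj hab
          exact List.Lex.cons ((ih t).mpr h2)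

private lemma lyndon_map_iff {α : Type*} (f : α → α) (r : α → α → Prop)
    (hinj : Function.Injective f)
    (hf : ∀ x y, r x y ↔ r (f x) (f y)) (w : List α) :
    IsLyndonRel r w ↔ IsLyndonRel r (w.map f) := by
  constructor
  · rintro ⟨hne, h⟩
    refine ⟨by simpa using hne, ?_⟩
    intro u v huv hu hv
    rw [List.map_eq_append_iff] at huv
    obtain ⟨u', v', rfl, rfl, rfl⟩ := huv
    have := h u' v' rfl (by simpa using hu) (by simpa using hv)
    exact (lex_map_iff f r hinj hf _ _).mp this
  · rintro ⟨hne, h⟩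
    refine ⟨by simpa using hne, ?_⟩
    intro u v huv hu hv
    have := h (u.map f) (v.map f) (by rw [huv, List.map_append])
      (by simpa using hu) (by simpa using hv)
    exact (lex_map_iff f r hinj hf _ _).mpr this

/-- The shift map Υ : [i₁^(d₁)…i_k^(d_k)] ↦ [i₁^(d₁+c_{i₁})…i_k^(d_k+c_{i_k})]
is strictly monotone for the lexicographic order, maps Lyndon loop words to
Lyndon loop words, and preserves costandard factorizations. -/
theorem shift_map_properties {I : Type*} [Fintype I] [LinearOrder I]
    (c : I → ℤ) (hc : ∀ i, 0 < c i) :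
    (∀ u v : List (I × ℤ),
      List.Lex (loopLt c) u v ↔
        List.Lex (loopLt c) (u.map (fun x => (x.1, x.2 + c x.1)))
          (v.map (fun x => (x.1, x.2 + c x.1)))) ∧
    (∀ w : List (I × ℤ), IsLyndonRel (loopLt c) w →
      IsLyndonRel (loopLt c) (w.map (fun x => (x.1, x.2 + c x.1)))) ∧
    (∀ l₁ l₂ : List (I × ℤ), Costandard (loopLt c) l₁ l₂ →
      Costandard (loopLt c) (l₁.map (fun x => (x.1, x.2 + c x.1)))
        (l₂.map (fun x => (x.1, x.2 + c x.1)))) := by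
  set f : I × ℤ → I × ℤ := fun x => (x.1, x.2 + c x.1) with hfdef
  have hc0 : ∀ i, (c i : ℚ) ≠ 0 := fun i => by
    exact_mod_cast (hc i).ne'
  have hratio : ∀ x : I × ℤ, ((f x).2 : ℚ) / (c (f x).1 : ℚ)
      = (x.2 : ℚ) / (c x.1 : ℚ) + 1 := by
    intro x
    simp only [hfdef]
    push_cast
    rw [add_div, div_self (hc0 x.1)]
  have hinj : Function.Injective f := by
    rintro ⟨i, d⟩ ⟨j, e⟩ h
    simp only [hfdef, Prod.mk.injEq] at h
    obtain ⟨rfl, h2⟩ := h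
    simp only [Prod.mk.injEq, true_and]
    omega
  have hf : ∀ x y : I × ℤ, loopLt c x y ↔ loopLt c (f x) (f y) := by
    intro x y
    unfold loopLt
    rw [hratio x, hratio y]
    constructor
    · rintro (h | ⟨h, h'⟩)
      · exact Or.inl (by linarith)
      · exact Or.inr ⟨by rw [h], by simpa [hfdef] using h'⟩
    · rintro (h | ⟨h, h'⟩)
      · exact Or.inl (by linarith)
      · exact Or.inr ⟨by linarith, by simpa [hfdef] using h'⟩
  refine ⟨fun u v => lex_map_iff f _ hinj hf u v,
    fun w hw => (lyndon_map_iff f _ hinj hf w).mp hw, ?_⟩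
  rintro l₁ l₂ ⟨h1, h2, h3, h4, h5⟩
  refine ⟨by simpa using h1, by simpa using h2,
    by rw [← List.map_append]; exact (lyndon_map_iff f _ hinj hf _).mp h3,
    (lyndon_map_iff f _ hinj hf _).mp h4, ?_⟩
  intro u v huv hu hv hvl
  rw [← List.map_append, List.map_eq_append_iff] at huv
  obtain ⟨u', v', heq, rfl, rfl⟩ := huv
  have := h5 u' v' heq (by simpa using hu) (by simpa using hv)
    ((lyndon_map_iff f _ hinj hf v').mpr hvl)
  simpa using this
end

section
/- Let w be a Lyndon loop word (smaller than all its proper suffixes) with first letter j^(−e), and suppose j^(−e) ≥ i^(−d) in the weighted order, where d ≥ 0. Then every letter ı^(−s) of w satisfies s ≥ p_ı, where p_ı is defined from (i,d) as in the weighted counting; consequently, if w has horizontal degree α = Σ k_ı α_ı and vertical degree −p, then p ≥ p(α) = Σ k_ı p_ı. -/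
lemma pointwise_key {I : Type*} [LinearOrder I]
    (c : I → ℤ) (hc : ∀ i, 0 < c i)
    (i : I) (d : ℤ) (p : I → ℤ)
    (hp : ∀ j, p j = if j = i then d
      else if c i ∣ d * c j then
        (if i < j then d * c j / c i else d * c j / c i + 1)
      else ⌈((d * c j : ℤ) : ℚ) / ((c i : ℤ) : ℚ)⌉)
    (x : I × ℤ) (hx : ¬ loopLt c x (i, -d)) : p x.1 ≤ -x.2 := by
  obtain ⟨a, t⟩ := x
  unfold loopLt at hx
  push_neg at hx
  obtain ⟨h1, h2⟩ := hx
  simp only at h1 h2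
  have hci : (0:ℚ) < (c i : ℚ) := by exact_mod_cast hc i
  have hca : (0:ℚ) < (c a : ℚ) := by exact_mod_cast hc a
  have hmul : (t : ℚ) * (c i) ≤ ((-d : ℤ) : ℚ) * (c a) :=
    (div_le_div_iff₀ hca hci).mp h1
  have hmulZ : t * c i ≤ (-d) * c a := by exact_mod_cast hmul
  rw [hp]
  by_cases hii : a = i
  · subst hii
    rw [if_pos rfl]
    nlinarith [hc a]
  · rw [if_neg hii]
    have hdc : d * c a ≤ -t * c i := by nlinarith
    by_cases hdvd : c i ∣ d * c a
    · rw [if_pos hdvd]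
      obtain ⟨q, hq⟩ := hdvd
      have hqdiv : d * c a / c i = q := by
        rw [hq]; exact Int.mul_ediv_cancel_left q (hc i).ne'
      rw [hqdiv]
      have hqle : q ≤ -t := by nlinarith [hc i]
      by_cases hlt : i < a
      · rw [if_pos hlt]; exact hqle
      · rw [if_neg hlt]
        rcases lt_or_eq_of_le hqle with h | h
        · omega
        · exfalso
          subst h
          have heqZ : t * c i = -d * c a := by linear_combination hq
          have heq : (t : ℚ) / (c a) = ((-d : ℤ) : ℚ) / (c i) := by
            rw [div_eq_div_iff hca.ne' hci.ne']
            exact_mod_cast heqZ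
          have hia := h2 heq
          have : a < i := lt_of_le_of_ne (not_lt.mp hlt) hii
          exact absurd this (not_lt.mpr hia)
    · rw [if_neg hdvd]
      rw [Int.ceil_le, div_le_iff₀ hci]
      exact_mod_cast hdc

lemma head_le_of_lyndon {β : Type*} (r : β → β → Prop) (w : List β) (hne : w ≠ [])
    (hlyn : IsLyndonRel r w) : ∀ x ∈ w, x = w.head hne ∨ r (w.head hne) x := by
  intro x hx
  obtain ⟨k, hk, hxk⟩ := List.mem_iff_getElem.mp hx
  rcases Nat.eq_zero_or_pos k with rfl | hk0
  · left
    rw [← hxk, List.getElem_zero]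
  · have hu : w.take k ≠ [] := by
      rw [ne_eq, List.take_eq_nil_iff]
      push_neg
      exact ⟨by omega, hne⟩
    have hv : w.drop k ≠ [] := by
      rw [ne_eq, List.drop_eq_nil_iff]
      omega
    have hlex := hlyn.2 (w.take k) (w.drop k) (List.take_append_drop k w).symm hu hv
    have hdrop : w.drop k = x :: w.drop (k+1) := by
      rw [List.drop_eq_getElem_cons hk, hxk]
    have hw : w = w.head hne :: w.tail := (List.cons_head_tail hne).symm
    rw [hdrop] at hlex
    rw [hw] at hlex
    cases hlex with
    | rel h => exact Or.inr h
    | cons h => exact Or.inl rfl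

lemma sum_neg_snd {I : Type*} (l : List (I × ℤ)) :
    (l.map (fun x => -x.2)).sum = -((l.map Prod.snd).sum) := by
  induction l with
  | nil => simp
  | cons a l ih => simp [ih, neg_add]; ring

/-- If a Lyndon loop word has first letter ≥ i^(−d) (d ≥ 0), then every letter
ı^(−s) satisfies s ≥ p_ı, and hence p ≥ p(α) where −p is the vertical degree. -/
theorem exponents_lower_bound_of_first_ge {I : Type*} [Fintype I] [LinearOrder I]
    (c : I → ℤ) (hc : ∀ i, 0 < c i)
    (i : I) (d : ℤ) (hd : 0 ≤ d) (p : I → ℤ)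
    (hp : ∀ j, p j = if j = i then d
      else if c i ∣ d * c j then
        (if i < j then d * c j / c i else d * c j / c i + 1)
      else ⌈((d * c j : ℤ) : ℚ) / ((c i : ℤ) : ℚ)⌉)
    (w : List (I × ℤ)) (hne : w ≠ [])
    (hlyn : IsLyndonRel (loopLt c) w)
    (hfirst : ¬ loopLt c (w.head hne) (i, -d)) :
    (∀ x ∈ w, p x.1 ≤ -x.2) ∧
      (w.map (fun x => p x.1)).sum ≤ -((w.map Prod.snd).sum) := by
  have hptwise : ∀ x ∈ w, p x.1 ≤ -x.2 := by
    intro x hx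
    apply pointwise_key c hc i d p hp
    rcases head_le_of_lyndon (loopLt c) w hne hlyn x hx with h | h
    · rw [h]; exact hfirst
    · -- transitivity: head ≥ (i,-d) and head < x ⇒ x ≥ (i,-d)
      intro hxlt
      apply hfirst
      set g : I × ℤ := (i, -d)
      set hd0 := w.head hne
      -- loopLt is transitive
      rcases h with h | ⟨heq, hlt⟩ <;> rcases hxlt with h' | ⟨heq', hlt'⟩
      · exact Or.inl (lt_trans h' h)
      · exact Or.inl (heq' ▸ h)
      · exact Or.inl (by rw [heq]; exact h')
      · exact Or.inr ⟨heq.trans heq', lt_trans hlt hlt'⟩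
  refine ⟨hptwise, ?_⟩
  have : (w.map (fun x => p x.1)).sum ≤ (w.map (fun x => -x.2)).sum :=
    List.sum_le_sum hptwise
  refine this.trans_eq ?_
  exact sum_neg_snd w
end
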